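/- Let θ be the 1-form on the null-cone region {X : G(X,X)=0, Z₀X ≠ 0} defined by θ_X(δX) = −G(X, Z₀δX)/F₀(X), where F₀(X) = G(X,P₀)² + G(X,Q₀)² and Z₀ = P₀∧Q₀ with P₀,Q₀ totally null. Then dθ = 0, i.e., θ is a closed 1-form. -/

import Mathlib

set_option maxHeartbeats 1000000


/-- the 1-form `θ_X(δX) = −G(X, Z₀δX)/F₀(X)`, with
`F₀(X) = G(X,P₀)² + G(X,Q₀)²` and `Z₀ = P₀ ∧ Q₀` (`P₀,Q₀` totally null), is
closed on the region `{G(X,X) = 0, Z₀X ≠ 0}` of the null cone: for constant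
directions `u, v`, `dθ(u,v) = ∂_u θ(·,v) − ∂_v θ(·,u) = 0`. -/
theorem theta_closed (d : ℕ)
    (G : (Fin (d+4) → ℝ) →ₗ[ℝ] (Fin (d+4) → ℝ) →ₗ[ℝ] ℝ)
    (hsymm : ∀ u v, G u v = G v u)
    (hnondeg : ∀ u, (∀ v, G u v = 0) → u = 0)
    (P₀ Q₀ : Fin (d+4) → ℝ)
    (hspan : LinearIndependent ℝ ![P₀, Q₀])
    (hPP : G P₀ P₀ = 0) (hQQ : G Q₀ Q₀ = 0) (hPQ : G P₀ Q₀ = 0)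
    (Z₀ : (Fin (d+4) → ℝ) → (Fin (d+4) → ℝ))
    (hZ₀ : ∀ w, Z₀ w = G P₀ w • Q₀ - G Q₀ w • P₀)
    (X : Fin (d+4) → ℝ) (hXnull : G X X = 0) (hXreg : Z₀ X ≠ 0) :
    ∀ u v : Fin (d+4) → ℝ,
      fderiv ℝ (fun Y => -G Y (Z₀ v) / ((G Y P₀) ^ 2 + (G Y Q₀) ^ 2)) X u
        - fderiv ℝ (fun Y => -G Y (Z₀ u) / ((G Y P₀) ^ 2 + (G Y Q₀) ^ 2)) X v
        = 0 := by
  intro u v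
  have hF : (G X P₀) ^ 2 + (G X Q₀) ^ 2 ≠ 0 := by
    intro h
    have ha0 : G X P₀ = 0 := by nlinarith [sq_nonneg (G X P₀), sq_nonneg (G X Q₀)]
    have hb0 : G X Q₀ = 0 := by nlinarith [sq_nonneg (G X P₀), sq_nonneg (G X Q₀)]
    apply hXreg
    rw [hZ₀, hsymm P₀ X, hsymm Q₀ X, ha0, hb0]
    simp
  have hG : ∀ w : Fin (d+4) → ℝ, HasFDerivAt (fun Y => G Y w)
      (LinearMap.toContinuousLinearMap (G.flip w)) X :=
    fun w => (LinearMap.toContinuousLinearMap (G.flip w)).hasFDerivAt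
  have hD : HasFDerivAt (fun Y => (G Y P₀) ^ 2 + (G Y Q₀) ^ 2)
      ((G X P₀ • LinearMap.toContinuousLinearMap (G.flip P₀)
          + G X P₀ • LinearMap.toContinuousLinearMap (G.flip P₀))
        + (G X Q₀ • LinearMap.toContinuousLinearMap (G.flip Q₀)
          + G X Q₀ • LinearMap.toContinuousLinearMap (G.flip Q₀))) X := by
    have h := ((hG P₀).mul (hG P₀)).add ((hG Q₀).mul (hG Q₀))
    simpa [pow_two, Pi.mul_def, Pi.add_def] using h
  have key : ∀ w : Fin (d+4) → ℝ,
      HasFDerivAt (fun Y => -G Y (Z₀ w) / ((G Y P₀) ^ 2 + (G Y Q₀) ^ 2))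
        ((-G X (Z₀ w)) • ((-(((G X P₀) ^ 2 + (G X Q₀) ^ 2) ^ 2)⁻¹) •
            ((G X P₀ • LinearMap.toContinuousLinearMap (G.flip P₀)
                + G X P₀ • LinearMap.toContinuousLinearMap (G.flip P₀))
              + (G X Q₀ • LinearMap.toContinuousLinearMap (G.flip Q₀)
                + G X Q₀ • LinearMap.toContinuousLinearMap (G.flip Q₀))))
          + (((G X P₀) ^ 2 + (G X Q₀) ^ 2)⁻¹) •
              (-(LinearMap.toContinuousLinearMap (G.flip (Z₀ w))))) X := by
    intro w
    have hInv := (hasDerivAt_inv hF).comp_hasFDerivAt X hD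
    have hN : HasFDerivAt (fun Y => -G Y (Z₀ w))
        (-(LinearMap.toContinuousLinearMap (G.flip (Z₀ w)))) X := (hG (Z₀ w)).neg
    have := hN.mul hInv
    simpa [div_eq_mul_inv, Pi.mul_def, Function.comp_def] using this
  rw [(key v).fderiv, (key u).fderiv]
  simp only [ContinuousLinearMap.add_apply, ContinuousLinearMap.smul_apply,
    ContinuousLinearMap.neg_apply, LinearMap.coe_toContinuousLinearMap',
    LinearMap.flip_apply, smul_eq_mul, pow_one]
  have expand : ∀ a b : Fin (d+4) → ℝ, G a (Z₀ b)
      = G P₀ b * G a Q₀ - G Q₀ b * G a P₀ := by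
    intro a b; rw [hZ₀]; simp
  rw [expand X v, expand X u, expand u v, expand v u,
    hsymm u P₀, hsymm u Q₀, hsymm v P₀, hsymm v Q₀]
  field_simp
  ring
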